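/- Let U be an m-dimensional F_q-subspace of F_{q^n} and let ℓ be an integer. Every F_q-bilinear form B: U × F_{q^n} → F_q can be written as B(x,y) = Tr_{q^n/q}(Σ_{j=0}^{m-1} a_j y x^{q^{j-ℓ}}) for uniquely determined a_0, ..., a_{m-1} ∈ F_{q^n}. -/

import Mathlib

open Polynomial

/-- Every `F_q`-bilinear form `B : U × F_{qⁿ} → F_q` on an `m`-dimensional subspace `U`
can be written uniquely as `B(x,y) = Tr(∑ⱼ aⱼ y x^(q^(j-ℓ)))`, `q`-exponents mod `n`. -/
theorem stmt_8 (q n m : ℕ) (hq : IsPrimePow q) (hn : 0 < n) (hm : m ≤ n) (ℓ : ℤ)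
    (K F : Type) [Field K] [Fintype K] [Field F] [Fintype F] [Algebra K F]
    (hK : Fintype.card K = q) (hF : Fintype.card F = q ^ n)
    (U : Submodule K F) (hU : Module.finrank K U = m)
    (B : U →ₗ[K] F →ₗ[K] K) :
    ∃! a : Fin m → F, ∀ (x : U) (y : F),
      B x y = Algebra.trace K F
        (∑ j : Fin m, a j * y * (x : F) ^ q ^ (((j : ℤ) - ℓ) % (n : ℤ)).toNat) := by
  classical
  have hq2 : 2 ≤ q := hq.two_le
  -- characteristic setup
  set p := ringChar K with hpdef
  haveI : CharP K p := ringChar.charP K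
  have hp : p.Prime := CharP.char_is_prime K p
  haveI : Fact p.Prime := ⟨hp⟩
  haveI : CharP F p := charP_of_injective_algebraMap (algebraMap K F).injective p
  obtain ⟨d, -, hqd⟩ := FiniteField.card K p
  rw [hK] at hqd
  -- Frobenius powers are additive and K-linear
  have hadd : ∀ (t : ℕ) (x y : F), (x + y) ^ q ^ t = x ^ q ^ t + y ^ q ^ t := by
    intro t x y
    rw [hqd, ← pow_mul]
    exact add_pow_char_pow x y p _
  have hsub : ∀ (t : ℕ) (x y : F), (x - y) ^ q ^ t = x ^ q ^ t - y ^ q ^ t := by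
    intro t x y
    rw [hqd, ← pow_mul]
    exact sub_pow_char_pow x y _
  have hsmulK : ∀ (t : ℕ) (c : K) (x : F), (c • x) ^ q ^ t = c • x ^ q ^ t := by
    intro t c x
    rw [Algebra.smul_def, Algebra.smul_def, mul_pow, ← map_pow]
    congr 2
    rw [← hK]
    exact FiniteField.pow_card_pow t c
  -- the exponent function
  set e : Fin m → ℕ := fun j => (((j : ℤ) - ℓ) % (n : ℤ)).toNat with he
  -- finite dimensionality
  haveI : FiniteDimensional K F := Module.Finite.of_basis (IsNoetherian.finsetBasis K F)
  have hfr : Module.finrank K F = n := by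
    have h1 : Fintype.card F = q ^ Module.finrank K F := by
      rw [← hK]; exact Module.card_eq_pow_finrank
    rw [hF] at h1
    exact (Nat.pow_right_injective hq2 h1.symm)
  haveI : Algebra.IsSeparable K F := Algebra.IsAlgebraic.isSeparable_of_perfectField
  -- the parametrizing map
  let frb : ℕ → (F →ₗ[K] F) := fun t =>
    { toFun := fun x => x ^ q ^ t
      map_add' := hadd t
      map_smul' := fun c x => hsmulK t c x }
  let g : (Fin m → F) → (U →ₗ[K] F) := fun a =>
    (∑ j : Fin m, LinearMap.mulLeft K (a j) ∘ₗ frb (e j)) ∘ₗ U.subtype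
  have hg : ∀ (a : Fin m → F) (x : U), g a x = ∑ j : Fin m, a j * (x : F) ^ q ^ e j := by
    intro a x
    simp [g, frb, LinearMap.sum_apply, LinearMap.mulLeft_apply]
  let Φ : (Fin m → F) → (U →ₗ[K] F →ₗ[K] K) := fun a => LinearMap.comp (Algebra.traceForm K F) (g a)
  have hΦ : ∀ (a : Fin m → F) (x : U) (y : F),
      Φ a x y = Algebra.trace K F (∑ j : Fin m, a j * y * (x : F) ^ q ^ e j) := by
    intro a x y
    have : g a x * y = ∑ j : Fin m, a j * y * (x : F) ^ q ^ e j := by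
      rw [hg, Finset.sum_mul]
      exact Finset.sum_congr rfl fun j _ => by ring
    simp only [Φ, LinearMap.comp_apply, Algebra.traceForm_apply, this]
  -- periodicity of Frobenius in the exponent
  have hper : ∀ (s : ℕ) (x : F), x ^ q ^ s = x ^ q ^ (s % n) := by
    intro s x
    conv_lhs => rw [← Nat.div_add_mod s n]
    rw [pow_add, pow_mul, pow_mul]
    congr 1
    rw [← hF]
    exact FiniteField.pow_card_pow _ x
  -- the key injectivity lemma
  have key : ∀ c : Fin m → F, (∀ x : U, ∑ j : Fin m, c j * (x : F) ^ q ^ e j = 0) → c = 0 := by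
    intro c hc
    rcases Nat.eq_zero_or_pos m with hm0 | hm0
    · subst hm0; funext j; exact j.elim0
    have hn0 : (0 : ℤ) < (n : ℤ) := by exact_mod_cast hn
    obtain ⟨L, hLn, hLlt⟩ : ∃ L : ℕ, (L : ℤ) = ℓ % (n : ℤ) ∧ L < n := by
      refine ⟨(ℓ % (n : ℤ)).toNat, Int.toNat_of_nonneg (Int.emod_nonneg _ hn0.ne'), ?_⟩
      have h1 := Int.emod_nonneg ℓ hn0.ne'
      have h2 := Int.emod_lt_of_pos ℓ hn0
      omega
    have hej : ∀ j : Fin m, ((e j : ℕ) : ℤ) = ((j : ℤ) - ℓ) % (n : ℤ) ∧ e j < n := by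
      intro j
      have h1 := Int.emod_nonneg ((j : ℤ) - ℓ) hn0.ne'
      have h2 := Int.emod_lt_of_pos ((j : ℤ) - ℓ) hn0
      refine ⟨Int.toNat_of_nonneg h1, ?_⟩
      show ((((j : ℤ)) - ℓ) % (n : ℤ)).toNat < n
      omega
    -- change of variables
    have hshift : ∀ (j : Fin m) (x : F), (x ^ q ^ (n - L)) ^ q ^ (j : ℕ) = x ^ q ^ e j := by
      intro j x
      rw [← pow_mul, ← pow_add, hper (n - L + (j : ℕ)), hper (e j)]
      have hmod : ((n : ℤ) - L + (j : ℕ)) % (n : ℤ) = ((j : ℤ) - ℓ) % (n : ℤ) := by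
        calc ((n : ℤ) - L + (j : ℕ)) % (n : ℤ)
            = (((j : ℕ) : ℤ) - L + (n : ℤ)) % (n : ℤ) := by congr 1; ring
          _ = (((j : ℕ) : ℤ) - L) % (n : ℤ) := Int.add_emod_right _ _
          _ = ((j : ℤ) - ℓ) % (n : ℤ) := by
              rw [hLn, Int.sub_emod, Int.emod_emod_of_dvd _ dvd_rfl, ← Int.sub_emod]
      have hfin : (n - L + (j : ℕ)) % n = e j := by
        have h1 : (((n - L + (j : ℕ)) % n : ℕ) : ℤ) = ((n : ℤ) - L + (j : ℕ)) % (n : ℤ) := by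
          push_cast [Nat.cast_sub hLlt.le]
          ring_nf
        have h2 : (((n - L + (j : ℕ)) % n : ℕ) : ℤ) = ((e j : ℕ) : ℤ) := by
          rw [h1, hmod, (hej j).1]
        exact_mod_cast h2
      rw [hfin, Nat.mod_eq_of_lt (hej j).2]
    -- the linearized polynomial
    set P : F[X] := ∑ j : Fin m, C (c j) * X ^ q ^ (j : ℕ) with hP
    have hval : ∀ x : U, P.eval ((x : F) ^ q ^ (n - L)) = 0 := by
      intro x
      rw [hP]
      simp only [eval_finset_sum, eval_mul, eval_C, eval_pow, eval_X]
      rw [← hc x]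
      exact Finset.sum_congr rfl fun j _ => by rw [hshift j]
    -- the evaluation points are many
    have hcardU : Nat.card U = q ^ m := by
      haveI : Fintype U := Fintype.ofFinite U
      rw [Nat.card_eq_fintype_card, ← hK, ← hU]; exact Module.card_eq_pow_finrank
    have hinj : Function.Injective (fun x : U => (x : F) ^ q ^ (n - L)) := by
      intro x y hxy
      have : ((x : F) - (y : F)) ^ q ^ (n - L) = 0 := by
        rw [hsub]; simpa using sub_eq_zero_of_eq hxy
      have := pow_eq_zero_iff (pow_ne_zero _ (by omega : q ≠ 0)) |>.mp this
      exact Subtype.ext (by linear_combination (norm := ring_nf) this)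
    have hdeg : P.natDegree < q ^ m := by
      have : P.natDegree ≤ q ^ (m - 1) := by
        apply Polynomial.natDegree_sum_le_of_forall_le
        intro j _
        refine (Polynomial.natDegree_C_mul_le _ _).trans ?_
        rw [Polynomial.natDegree_X_pow]
        exact Nat.pow_le_pow_right (by omega) (by omega)
      calc P.natDegree ≤ q ^ (m - 1) := this
        _ < q ^ m := Nat.pow_lt_pow_right hq2 (by omega)
    have hP0 : P = 0 := by
      apply Polynomial.eq_zero_of_natDegree_lt_card_of_eval_eq_zero P hinj hval
      rw [← Nat.card_eq_fintype_card, hcardU]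
      exact hdeg
    -- extract coefficients
    funext j
    have hco := congrArg (fun Q : F[X] => Q.coeff (q ^ (j : ℕ))) hP0
    simp only [hP, Polynomial.finset_sum_coeff, Polynomial.coeff_C_mul,
      Polynomial.coeff_X_pow, Polynomial.coeff_zero] at hco
    have h3 : (∑ i : Fin m, c i * if q ^ (j : ℕ) = q ^ (i : ℕ) then (1 : F) else 0) = c j := by
      rw [Finset.sum_eq_single j]
      · simp
      · intro i _ hij
        have hne : q ^ (j : ℕ) ≠ q ^ (i : ℕ) := fun h =>
          hij (Fin.ext (Nat.pow_right_injective hq2 h)).symm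
        simp [hne]
      · intro h; exact absurd (Finset.mem_univ j) h
    rw [h3] at hco
    simpa using hco
  -- injectivity of Φ
  have hΦinj : Function.Injective Φ := by
    intro a b hab
    have hgab : ∀ x : U, g a x - g b x = 0 := by
      intro x
      apply (traceForm_nondegenerate K F).1
      intro y
      have h1 : Φ a x y = Φ b x y := by rw [hab]
      simp only [Φ, LinearMap.comp_apply, Algebra.traceForm_apply] at h1
      rw [Algebra.traceForm_apply, sub_mul, map_sub, h1, sub_self]
    have : a - b = 0 := by
      apply key
      intro x
      have h2 := hgab x
      rw [hg, hg, ← Finset.sum_sub_distrib] at h2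
      rw [← h2]
      exact Finset.sum_congr rfl fun j _ => by simp [sub_mul]
    exact sub_eq_zero.mp this
  -- cardinality count for surjectivity
  haveI : Finite (F →ₗ[K] K) := Finite.of_injective _ DFunLike.coe_injective
  haveI : Finite (U →ₗ[K] F →ₗ[K] K) := Finite.of_injective _ DFunLike.coe_injective
  have hΦbij : Function.Bijective Φ := by
    rw [Nat.bijective_iff_injective_and_card]
    refine ⟨hΦinj, ?_⟩
    haveI : Fintype (F →ₗ[K] K) := Fintype.ofFinite _
    haveI : Fintype (U →ₗ[K] F →ₗ[K] K) := Fintype.ofFinite _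
    haveI : Fintype U := Fintype.ofFinite U
    rw [Nat.card_eq_fintype_card, Nat.card_eq_fintype_card]
    rw [show Fintype.card (U →ₗ[K] F →ₗ[K] K)
        = q ^ Module.finrank K (U →ₗ[K] F →ₗ[K] K) by rw [← hK]; exact Module.card_eq_pow_finrank (V := U →ₗ[K] F →ₗ[K] K)]
    rw [Module.finrank_linearMap, Module.finrank_linearMap, Module.finrank_self, hU, hfr]
    rw [Fintype.card_pi, Finset.prod_const, Finset.card_univ, Fintype.card_fin, hF]
    rw [← pow_mul, mul_one, mul_comm]
  obtain ⟨a, ha⟩ := hΦbij.surjective B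
  refine ⟨a, ?_, ?_⟩
  · intro x y
    rw [← ha, hΦ]
  · intro a' ha'
    apply hΦinj
    rw [ha]
    ext x y
    exact (hΦ a' x y).trans (ha' x y).symm
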